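/- Let λ > 0 and let a be a complex number with Re a > 0, and put z = λa. Then Γ(−a, z) = z^{−a} e^{−z} ∫_0^∞ exp( −a(λ e^t + t − λ) ) dt, where the integral is over t ∈ (0, ∞). -/

import Mathlib

open Complex Real MeasureTheory Set Filter Asymptotics

noncomputable section

/-- `Λ(λ) = λ + log λ + 1 + πi`. -/
def Lam (l : ℝ) : ℂ := (l : ℂ) + (Real.log l : ℂ) + 1 + (Real.pi : ℂ) * Complex.I

/-- `Λ̄(λ) = λ + log λ + 1 − πi`. -/
def LamBar (l : ℝ) : ℂ := (l : ℂ) + (Real.log l : ℂ) + 1 - (Real.pi : ℂ) * Complex.I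

/-- `ω(λ) = arg(λ + log λ + 1 + πi)`, the principal argument. -/
def om (l : ℝ) : ℝ := (Lam l).arg

/-- The scaled gamma function `Γ*(z) = Γ(z)/(√(2π) z^(z-1/2) e^(-z))`. -/
def GammaStar (z : ℂ) : ℂ :=
  Complex.Gamma z /
    ((Real.sqrt (2 * Real.pi) : ℂ) * z ^ (z - 1 / 2) * Complex.exp (-z))

/-- The base function `(λ+1)t/(λ e^t + t − λ)`, extended analytically by `1` at `t = 0`. -/
def phiFun (l : ℝ) (t : ℂ) : ℂ :=
  if t = 0 then 1 else ((l : ℂ) + 1) * t / ((l : ℂ) * Complex.exp t + t - (l : ℂ))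

/-- The coefficients `b_n(−λ)`. -/
def bCoeff (l : ℝ) (n : ℕ) : ℂ :=
  ((l : ℂ) + 1) ^ n * iteratedDeriv n (fun t => (phiFun l t) ^ (n + 1)) 0

/-- The incomplete gamma function `Γ(−a, λa)`. -/
def Gi (l : ℝ) (a : ℂ) : ℂ :=
  ∫ u in Ioi (0 : ℝ),
    ((l : ℂ) * a + (u : ℂ)) ^ (-a - 1) * Complex.exp (-((l : ℂ) * a + (u : ℂ)))

/-- The partial sum `Σ_{n<N} a^n b_n(−λ)/((λ+1)a)^(2n+1)`. -/
def partSum (l : ℝ) (a : ℂ) (N : ℕ) : ℂ :=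
  ∑ n ∈ Finset.range N, a ^ n * bCoeff l n / ((((l : ℂ) + 1) * a) ^ (2 * n + 1))

/-- The remainder `R_N(a,λ)`, defined by
`Γ(−a,λa) = (λa)^(−a) e^(−λa) (Σ_{n<N} a^n b_n(−λ)/((λ+1)a)^(2n+1) + R_N(a,λ))`. -/
def Rrem (l : ℝ) (N : ℕ) (a : ℂ) : ℂ :=
  ((l : ℂ) * a) ^ a * Complex.exp ((l : ℂ) * a) * Gi l a - partSum l a N

open scoped Topology

lemma aux_ofReal_mul_cpow {r : ℝ} (hr : 0 < r) {z : ℂ} (hz : z ≠ 0) (s : ℂ) :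
    ((r : ℂ) * z) ^ s = (r : ℂ) ^ s * z ^ s := by
  have hr' : (r : ℂ) ≠ 0 := by exact_mod_cast hr.ne'
  rw [Complex.cpow_def_of_ne_zero (mul_ne_zero hr' hz), Complex.cpow_def_of_ne_zero hr',
    Complex.cpow_def_of_ne_zero hz, Complex.log_ofReal_mul hr hz, ← Complex.exp_add,
    Complex.ofReal_log hr.le, add_mul]

lemma aux_cpow_bound {c : ℝ} (hc : 0 < c) {s ζ : ℂ} (hζ : c ≤ ζ.re) (hs : s.re ≤ 0) :
    ‖ζ ^ s‖ ≤ c ^ s.re * Real.exp (Real.pi * |s.im|) := by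
  have hζ0 : ζ ≠ 0 := by
    intro h; rw [h] at hζ; simp only [Complex.zero_re] at hζ; linarith
  rw [Complex.norm_cpow_of_ne_zero hζ0, div_eq_mul_inv, ← Real.exp_neg]
  have h1 : ‖ζ‖ ^ s.re ≤ c ^ s.re :=
    Real.rpow_le_rpow_of_nonpos hc (hζ.trans (Complex.re_le_norm ζ)) hs
  have h2 : Real.exp (-(ζ.arg * s.im)) ≤ Real.exp (Real.pi * |s.im|) := by
    apply Real.exp_le_exp.2
    calc -(ζ.arg * s.im) ≤ |ζ.arg * s.im| := neg_le_abs _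
      _ = |ζ.arg| * |s.im| := abs_mul _ _
      _ ≤ Real.pi * |s.im| :=
          mul_le_mul_of_nonneg_right (Complex.abs_arg_le_pi ζ) (abs_nonneg _)
  exact mul_le_mul h1 h2 (Real.exp_pos _).le (Real.rpow_nonneg hc.le _)

lemma aux_mul_exp_int {d : ℝ} (hd : 0 < d) :
    IntegrableOn (fun w : ℝ => w * Real.exp (-d * w)) (Ioi 0) := by
  have := integrableOn_rpow_mul_exp_neg_mul_rpow (p := 1) (s := 1) (b := d)
    (by norm_num) zero_lt_one hd
  refine this.congr_fun (fun x hx => ?_) measurableSet_Ioi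
  norm_num [Real.rpow_one]

lemma aux_mul_exp_tendsto {d : ℝ} (hd : 0 < d) :
    Tendsto (fun w : ℝ => w * Real.exp (-d * w)) atTop (𝓝 0) := by
  have h1 : Tendsto (fun x : ℝ => x * Real.exp (-x)) atTop (𝓝 0) := by
    simpa using Real.tendsto_pow_mul_exp_neg_atTop_nhds_zero 1
  have h2 : Tendsto (fun w : ℝ => d * w) atTop atTop :=
    Tendsto.const_mul_atTop hd tendsto_id
  have := (h1.comp h2).const_mul (1 / d)
  simp only [mul_zero] at this
  refine this.congr (fun w => ?_)
  simp only [Function.comp_apply]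
  field_simp

lemma aux_rot {z s : ℂ} (hz : 0 < z.re) (hs : s.re ≤ 0) {c : ℂ} (hc : 0 < c.re) :
    (∫ w in Ioi (0:ℝ), c * (z + c * w) ^ s * Complex.exp (-(z + c * w)))
      = ∫ w in Ioi (0:ℝ), (z + w) ^ s * Complex.exp (-(z + w)) := by
  set F : ℂ → ℝ → ℂ := fun b w => b * (z + b * w) ^ s * Complex.exp (-(z + b * w)) with hF
  set F' : ℂ → ℝ → ℂ := fun b w =>
    ((z + b * w) ^ s + b * w * (s * (z + b * w) ^ (s - 1)) - b * w * (z + b * w) ^ s) *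
      Complex.exp (-(z + b * w)) with hF'
  have hrecalc : ∀ (b : ℂ) (w : ℝ), (z + b * w).re = z.re + b.re * w := by
    intro b w
    simp [Complex.add_re, Complex.mul_re]
  have hre : ∀ (b : ℂ) (w : ℝ), 0 < b.re → 0 ≤ w → 0 < (z + b * w).re := by
    intro b w hb hw
    rw [hrecalc]
    nlinarith
  -- derivative in b
  have hderivb : ∀ (w : ℝ), 0 ≤ w → ∀ (b : ℂ), 0 < b.re →
      HasDerivAt (fun b => F b w) (F' b w) b := by
    intro w hw b hb
    have h1 : HasDerivAt (fun b : ℂ => z + b * w) ((w : ℂ)) b := by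
      simpa using ((hasDerivAt_id b).mul_const ((w : ℂ))).const_add z
    have h2 : HasDerivAt (fun b : ℂ => (z + b * w) ^ s)
        (s * (z + b * w) ^ (s - 1) * w) b :=
      h1.cpow_const (Or.inl (hre b w hb hw))
    have h3 : HasDerivAt (fun b : ℂ => Complex.exp (-(z + b * w)))
        (Complex.exp (-(z + b * w)) * (-(w : ℂ))) b := by
      simpa using h1.neg.cexp
    have h4 := ((hasDerivAt_id b).mul h2).mul h3
    refine h4.congr_deriv ?_
    simp only [hF', id_eq, Pi.mul_apply]
    ring
  -- continuity in w
  have hbase : ∀ b : ℂ, Continuous (fun w : ℝ => z + b * w) := fun b =>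
    continuous_const.add (continuous_const.mul Complex.continuous_ofReal)
  have hcpow : ∀ (b : ℂ), 0 < b.re → ∀ (p : ℂ),
      ContinuousOn (fun w : ℝ => (z + b * w) ^ p) (Ici 0) := by
    intro b hb p w hw
    exact ((hbase b).continuousAt.cpow continuousAt_const
      (Or.inl (hre b w hb hw))).continuousWithinAt
  have hexpc : ∀ b : ℂ, Continuous (fun w : ℝ => Complex.exp (-(z + b * w))) := fun b =>
    Complex.continuous_exp.comp (hbase b).neg
  have hcontF : ∀ (b : ℂ), 0 < b.re → ContinuousOn (fun w : ℝ => F b w) (Ici 0) := by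
    intro b hb
    exact (continuousOn_const.mul (hcpow b hb s)).mul (hexpc b).continuousOn
  have hcontF' : ∀ (b : ℂ), 0 < b.re → ContinuousOn (fun w : ℝ => F' b w) (Ici 0) := by
    intro b hb
    refine ContinuousOn.mul ?_ (hexpc b).continuousOn
    refine ContinuousOn.sub (ContinuousOn.add (hcpow b hb s) ?_) ?_
    · exact ((continuous_const.mul Complex.continuous_ofReal).continuousOn).mul
        (continuousOn_const.mul (hcpow b hb (s - 1)))
    · exact ((continuous_const.mul Complex.continuous_ofReal).continuousOn).mul (hcpow b hb s)
  -- norm of exponential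
  have hnormexp : ∀ (b : ℂ) (w : ℝ),
      ‖Complex.exp (-(z + b * w))‖ = Real.exp (-(z.re + b.re * w)) := by
    intro b w
    rw [Complex.norm_exp]
    congr 1
    rw [Complex.neg_re, hrecalc]
  -- uniform bounds on cpow factors
  set C1 : ℝ := z.re ^ s.re * Real.exp (Real.pi * |s.im|) with hC1def
  set C2 : ℝ := z.re ^ (s.re - 1) * Real.exp (Real.pi * |s.im|) with hC2def
  have hC1pos : 0 < C1 := mul_pos (Real.rpow_pos_of_pos hz _) (Real.exp_pos _)
  have hC2pos : 0 < C2 := mul_pos (Real.rpow_pos_of_pos hz _) (Real.exp_pos _)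
  have hb1 : ∀ (b : ℂ) (w : ℝ), 0 < b.re → 0 ≤ w → ‖(z + b * w) ^ s‖ ≤ C1 := by
    intro b w hb hw
    refine aux_cpow_bound hz ?_ hs
    rw [hrecalc]; nlinarith
  have hb2 : ∀ (b : ℂ) (w : ℝ), 0 < b.re → 0 ≤ w → ‖(z + b * w) ^ (s - 1)‖ ≤ C2 := by
    intro b w hb hw
    have h := aux_cpow_bound hz (s := s - 1) (ζ := z + b * w)
      (by rw [hrecalc]; nlinarith) (by simp [Complex.sub_re]; linarith)
    simpa [Complex.sub_re, Complex.sub_im] using h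
  -- key: H has zero derivative at every point of the right half plane
  have key : ∀ b₀ : ℂ, 0 < b₀.re →
      HasDerivAt (fun b => ∫ w in Ioi (0:ℝ), F b w) 0 b₀ := by
    intro b₀ hb₀
    set δ : ℝ := b₀.re / 2 with hδdef
    have hδ : 0 < δ := by positivity
    set M : ℝ := ‖b₀‖ + δ with hMdef
    have hM : 0 < M := by positivity
    have hball : ∀ b ∈ Metric.ball b₀ δ, δ ≤ b.re ∧ ‖b‖ ≤ M := by
      intro b hb
      rw [Metric.mem_ball, dist_eq_norm] at hb
      have h1 : |b.re - b₀.re| ≤ ‖b - b₀‖ := by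
        simpa using Complex.abs_re_le_norm (b - b₀)
      have h2 := abs_le.1 h1
      constructor
      · have : b₀.re = 2 * δ := by rw [hδdef]; ring
        linarith [h2.1, hb.le]
      · calc ‖b‖ = ‖b₀ + (b - b₀)‖ := by ring_nf
          _ ≤ ‖b₀‖ + ‖b - b₀‖ := norm_add_le _ _
          _ ≤ M := by rw [hMdef]; linarith [hb.le]
    set K : ℝ := M * (‖s‖ * C2) + M * C1 with hKdef
    set bound : ℝ → ℝ := fun w =>
      Real.exp (-z.re) * (C1 * Real.exp (-δ * w) + K * (w * Real.exp (-δ * w))) with hbdef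
    have hexpsplit : ∀ w : ℝ, Real.exp (-(z.re + δ * w))
        = Real.exp (-z.re) * Real.exp (-δ * w) := by
      intro w
      rw [← Real.exp_add]; congr 1; ring
    have h_bound : ∀ᵐ w ∂(volume.restrict (Ioi (0:ℝ))),
        ∀ b ∈ Metric.ball b₀ δ, ‖F' b w‖ ≤ bound w := by
      filter_upwards [ae_restrict_mem measurableSet_Ioi] with w hw
      intro b hbmem
      obtain ⟨hbre, hbnorm⟩ := hball b hbmem
      have hbre0 : 0 < b.re := lt_of_lt_of_le hδ hbre
      have hw0 : 0 ≤ w := (mem_Ioi.1 hw).le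
      have hX1 := hb1 b w hbre0 hw0
      have hX2 := hb2 b w hbre0 hw0
      have e1 : ‖(z + b * w) ^ s + b * w * (s * (z + b * w) ^ (s - 1))
          - b * w * (z + b * w) ^ s‖ ≤ C1 + M * w * (‖s‖ * C2) + M * w * C1 := by
        refine (norm_sub_le _ _).trans ?_
        have t2 : ‖b * (w:ℂ) * (s * (z + b * w) ^ (s - 1))‖ ≤ M * w * (‖s‖ * C2) := by
          rw [norm_mul, norm_mul, norm_mul, Complex.norm_real, Real.norm_eq_abs,
            _root_.abs_of_nonneg hw0]
          gcongr
        have t3 : ‖b * (w:ℂ) * (z + b * w) ^ s‖ ≤ M * w * C1 := by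
          rw [norm_mul, norm_mul, Complex.norm_real, Real.norm_eq_abs, _root_.abs_of_nonneg hw0]
          gcongr
        have t1 := (norm_add_le ((z + b * w) ^ s) (b * w * (s * (z + b * w) ^ (s - 1)))).trans
          (add_le_add hX1 t2)
        linarith
      have e2 : Real.exp (-(z.re + b.re * w)) ≤ Real.exp (-(z.re + δ * w)) := by
        apply Real.exp_le_exp.2
        nlinarith
      calc ‖F' b w‖ = ‖(z + b * w) ^ s + b * w * (s * (z + b * w) ^ (s - 1))
            - b * w * (z + b * w) ^ s‖ * ‖Complex.exp (-(z + b * w))‖ := norm_mul _ _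
        _ ≤ (C1 + M * w * (‖s‖ * C2) + M * w * C1) * Real.exp (-(z.re + δ * w)) := by
            rw [hnormexp]
            exact mul_le_mul e1 e2 (Real.exp_pos _).le (by positivity)
        _ = bound w := by
            rw [hbdef, hexpsplit, hKdef]
            ring
    have bound_int : Integrable bound (volume.restrict (Ioi (0:ℝ))) := by
      refine Integrable.const_mul ?_ _
      exact ((exp_neg_integrableOn_Ioi 0 hδ).const_mul C1).add
        ((aux_mul_exp_int hδ).const_mul K)
    have hF_meas : ∀ᶠ b in 𝓝 b₀, AEStronglyMeasurable (F b) (volume.restrict (Ioi (0:ℝ))) := by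
      filter_upwards [Metric.ball_mem_nhds b₀ hδ] with b hb
      exact ((hcontF b (lt_of_lt_of_le hδ (hball b hb).1)).mono
        Ioi_subset_Ici_self).aestronglyMeasurable measurableSet_Ioi
    have hb₀M : ‖b₀‖ ≤ M := by rw [hMdef]; linarith
    have hb₀δ : δ ≤ b₀.re := by rw [hδdef]; linarith
    have hF_int : Integrable (F b₀) (volume.restrict (Ioi (0:ℝ))) := by
      refine Integrable.mono' (g := fun w => M * C1 * Real.exp (-z.re) * Real.exp (-δ * w))
        (((exp_neg_integrableOn_Ioi 0 hδ).const_mul _))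
        (((hcontF b₀ hb₀).mono Ioi_subset_Ici_self).aestronglyMeasurable measurableSet_Ioi) ?_
      filter_upwards [ae_restrict_mem measurableSet_Ioi] with w hw
      have hw0 : 0 ≤ w := (mem_Ioi.1 hw).le
      have e2 : Real.exp (-(z.re + b₀.re * w)) ≤ Real.exp (-(z.re + δ * w)) := by
        apply Real.exp_le_exp.2
        nlinarith
      calc ‖F b₀ w‖ = ‖b₀ * (z + b₀ * w) ^ s‖ * ‖Complex.exp (-(z + b₀ * w))‖ := norm_mul _ _
        _ ≤ (M * C1) * Real.exp (-(z.re + δ * w)) := by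
            rw [hnormexp]
            refine mul_le_mul ?_ e2 (Real.exp_pos _).le (by positivity)
            rw [norm_mul]
            exact mul_le_mul hb₀M (hb1 b₀ w hb₀ hw0) (norm_nonneg _) (by positivity)
        _ = M * C1 * Real.exp (-z.re) * Real.exp (-δ * w) := by rw [hexpsplit]; ring
    have hF'_meas : AEStronglyMeasurable (F' b₀) (volume.restrict (Ioi (0:ℝ))) :=
      ((hcontF' b₀ hb₀).mono Ioi_subset_Ici_self).aestronglyMeasurable measurableSet_Ioi
    have h_diff : ∀ᵐ w ∂(volume.restrict (Ioi (0:ℝ))),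
        ∀ b ∈ Metric.ball b₀ δ, HasDerivAt (F · w) (F' b w) b := by
      filter_upwards [ae_restrict_mem measurableSet_Ioi] with w hw
      intro b hb
      exact hderivb w (mem_Ioi.1 hw).le b (lt_of_lt_of_le hδ (hball b hb).1)
    obtain ⟨hFi', hH⟩ := hasDerivAt_integral_of_dominated_loc_of_deriv_le (Metric.ball_mem_nhds b₀ hδ)
      hF_meas hF_int hF'_meas h_bound bound_int h_diff
    -- the derivative integral vanishes
    have hzero : (∫ w in Ioi (0:ℝ), F' b₀ w) = 0 := by
      set Φ : ℝ → ℂ := fun w => (w : ℂ) * (z + b₀ * w) ^ s * Complex.exp (-(z + b₀ * w))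
        with hΦ
      have hΦd : ∀ w ∈ Ici (0:ℝ), HasDerivAt Φ (F' b₀ w) w := by
        intro w hw
        have h1 : HasDerivAt (fun ζ : ℂ => z + b₀ * ζ) b₀ ((w : ℂ)) := by
          simpa using ((hasDerivAt_id ((w : ℂ))).const_mul b₀).const_add z
        have h2 : HasDerivAt (fun ζ : ℂ => (z + b₀ * ζ) ^ s)
            (s * (z + b₀ * (w : ℂ)) ^ (s - 1) * b₀) ((w : ℂ)) := by
          refine h1.cpow_const (Or.inl ?_)
          have := hre b₀ w hb₀ hw
          simpa using this
        have h3 : HasDerivAt (fun ζ : ℂ => Complex.exp (-(z + b₀ * ζ)))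
            (Complex.exp (-(z + b₀ * (w : ℂ))) * (-b₀)) ((w : ℂ)) := by
          simpa using h1.neg.cexp
        have h4 := (((hasDerivAt_id ((w : ℂ))).mul h2).mul h3).comp_ofReal
        refine h4.congr_deriv ?_
        simp only [hF', id_eq, Pi.mul_apply]
        ring
      have hΦt : Tendsto Φ atTop (𝓝 0) := by
        have hg : Tendsto (fun w : ℝ => (C1 * Real.exp (-z.re)) * (w * Real.exp (-δ * w)))
            atTop (𝓝 0) := by
          simpa using (aux_mul_exp_tendsto hδ).const_mul (C1 * Real.exp (-z.re))
        refine squeeze_zero_norm' ?_ hg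
        filter_upwards [eventually_ge_atTop (0:ℝ)] with w hw0
        have e2 : Real.exp (-(z.re + b₀.re * w)) ≤ Real.exp (-(z.re + δ * w)) := by
          apply Real.exp_le_exp.2
          nlinarith
        calc ‖Φ w‖ = ‖(w : ℂ) * (z + b₀ * w) ^ s‖ * ‖Complex.exp (-(z + b₀ * w))‖ :=
              norm_mul _ _
          _ ≤ (w * C1) * Real.exp (-(z.re + δ * w)) := by
              rw [hnormexp]
              refine mul_le_mul ?_ e2 (Real.exp_pos _).le (by positivity)
              rw [norm_mul, Complex.norm_real, Real.norm_eq_abs, _root_.abs_of_nonneg hw0]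
              exact mul_le_mul_of_nonneg_left (hb1 b₀ w hb₀ hw0) hw0
          _ = (C1 * Real.exp (-z.re)) * (w * Real.exp (-δ * w)) := by
              rw [hexpsplit]; ring
      have hFTC := integral_Ioi_of_hasDerivAt_of_tendsto' hΦd hFi' hΦt
      rw [hFTC]
      simp [hΦ]
    rw [hzero] at hH
    exact hH
  -- constancy on the convex open half plane
  have hS_conv : Convex ℝ {b : ℂ | 0 < b.re} := convex_halfSpace_re_gt 0
  have hS_open : IsOpen {b : ℂ | 0 < b.re} := isOpen_lt continuous_const Complex.continuous_re
  have hdiff : DifferentiableOn ℂ (fun b => ∫ w in Ioi (0:ℝ), F b w) {b : ℂ | 0 < b.re} :=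
    fun b hb => ((key b hb).differentiableAt).differentiableWithinAt
  have hfd : ∀ b ∈ {b : ℂ | 0 < b.re},
      fderivWithin ℂ (fun b => ∫ w in Ioi (0:ℝ), F b w) {b : ℂ | 0 < b.re} b = 0 := by
    intro b hb
    rw [fderivWithin_of_isOpen hS_open hb, (key b hb).hasFDerivAt.fderiv]
    ext
    simp
  have hconst := hS_conv.is_const_of_fderivWithin_eq_zero hdiff hfd
    (hc : c ∈ {b : ℂ | 0 < b.re}) (by simp : (1:ℂ) ∈ {b : ℂ | 0 < b.re})
  simpa [hF] using hconst

/-- integral representation (2.1): for `λ > 0` and `Re a > 0`, with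
`z = λa`, `Γ(−a, z) = z^{−a} e^{−z} ∫_0^∞ exp(−a(λ e^t + t − λ)) dt`. -/
theorem incGamma_integral_repr (l : ℝ) (hl : 0 < l) (a : ℂ) (ha : 0 < a.re) :
    Gi l a = ((l : ℂ) * a) ^ (-a) * Complex.exp (-((l : ℂ) * a)) *
      ∫ t in Ioi (0 : ℝ),
        Complex.exp (-a * ((l : ℂ) * Complex.exp (t : ℂ) + (t : ℂ) - (l : ℂ))) := by
  have ha0 : a ≠ 0 := by
    intro h; rw [h] at ha; simp at ha
  have hl0 : (l : ℂ) ≠ 0 := Complex.ofReal_ne_zero.2 hl.ne'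
  have hz : 0 < ((l:ℂ) * a).re := by
    simp only [Complex.mul_re, Complex.ofReal_re, Complex.ofReal_im, zero_mul, sub_zero]
    positivity
  have hs : (-a - 1 : ℂ).re ≤ 0 := by
    simp only [Complex.sub_re, Complex.neg_re, Complex.one_re]
    linarith
  -- Step 1: rotate the contour
  have h1 : Gi l a
      = ∫ w in Ioi (0:ℝ), a * ((l:ℂ) * a + a * w) ^ (-a - 1) *
          Complex.exp (-((l:ℂ) * a + a * w)) := by
    unfold Gi
    rw [← aux_rot hz hs ha]
  -- Step 2: change of variables w = l(eᵗ - 1)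
  have himg : (fun t : ℝ => l * (Real.exp t - 1)) '' (Ioi 0) = Ioi 0 := by
    ext y
    simp only [mem_image, mem_Ioi]
    constructor
    · rintro ⟨t, ht, rfl⟩
      nlinarith [Real.add_one_lt_exp (ne_of_gt ht)]
    · intro hy
      have hyl : 0 < y / l := div_pos hy hl
      refine ⟨Real.log (1 + y / l), Real.log_pos (by linarith), ?_⟩
      rw [Real.exp_log (by linarith)]
      field_simp
      ring
  have hderivf : ∀ t ∈ Ioi (0:ℝ), HasDerivWithinAt (fun t : ℝ => l * (Real.exp t - 1))
      (l * Real.exp t) (Ioi 0) t := by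
    intro t _
    exact (((Real.hasDerivAt_exp t).sub_const 1).const_mul l).hasDerivWithinAt
  have hinj : InjOn (fun t : ℝ => l * (Real.exp t - 1)) (Ioi 0) := by
    have hmono : StrictMonoOn (fun t : ℝ => l * (Real.exp t - 1)) (Ioi 0) := by
      intro x _ y _ hxy
      have := Real.exp_lt_exp.2 hxy
      simp only
      nlinarith
    exact hmono.injOn
  have h2 := integral_image_eq_integral_abs_deriv_smul measurableSet_Ioi hderivf hinj
    (fun w : ℝ => a * ((l:ℂ) * a + a * w) ^ (-a - 1) * Complex.exp (-((l:ℂ) * a + a * w)))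
  rw [himg] at h2
  -- Step 3: pointwise identification of the integrand
  have hpt : ∀ t : ℝ, |l * Real.exp t| •
      (a * ((l:ℂ) * a + a * ((l * (Real.exp t - 1) : ℝ) : ℂ)) ^ (-a - 1) *
        Complex.exp (-((l:ℂ) * a + a * ((l * (Real.exp t - 1) : ℝ) : ℂ))))
      = ((l : ℂ) * a) ^ (-a) * Complex.exp (-((l : ℂ) * a)) *
        Complex.exp (-a * ((l : ℂ) * Complex.exp (t : ℂ) + (t : ℂ) - (l : ℂ))) := by
    intro t
    have hP : (0:ℝ) < l * Real.exp t := by positivity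
    have hP0 : ((l * Real.exp t : ℝ) : ℂ) ≠ 0 := Complex.ofReal_ne_zero.2 hP.ne'
    have hbase : (l:ℂ) * a + a * ((l * (Real.exp t - 1) : ℝ) : ℂ)
        = ((l * Real.exp t : ℝ) : ℂ) * a := by
      push_cast; ring
    rw [hbase, aux_ofReal_mul_cpow hP ha0 (-a - 1)]
    have hearg : (-(((l * Real.exp t : ℝ) : ℂ) * a)) = -a * ((l:ℂ) * Complex.exp (t:ℂ)) := by
      push_cast; ring
    have hPs : ((l * Real.exp t : ℝ) : ℂ) ^ (-a - 1)
        = Complex.exp (((Real.log l + t : ℝ) : ℂ) * (-a - 1)) := by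
      rw [Complex.cpow_def_of_ne_zero hP0, ← Complex.ofReal_log hP.le,
        Real.log_mul hl.ne' (Real.exp_pos t).ne', Real.log_exp]
    have hPexp : ((l * Real.exp t : ℝ) : ℂ) = Complex.exp ((Real.log l + t : ℝ) : ℂ) := by
      rw [← Complex.exp_log hP0, ← Complex.ofReal_log hP.le,
        Real.log_mul hl.ne' (Real.exp_pos t).ne', Real.log_exp]
    have hzpow : ((l:ℂ) * a) ^ (-a) = ((l:ℝ):ℂ) ^ (-a) * a ^ (-a) :=
      aux_ofReal_mul_cpow hl ha0 (-a)
    have hlpow : ((l:ℝ):ℂ) ^ (-a) = Complex.exp (((Real.log l : ℝ) : ℂ) * (-a)) := by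
      rw [Complex.cpow_def_of_ne_zero hl0, ← Complex.ofReal_log hl.le]
    have haa : a ^ (-a - 1 : ℂ) * a = a ^ (-a) := by
      conv_rhs => rw [show -a = (-a - 1) + 1 by ring]
      rw [Complex.cpow_add _ _ ha0, Complex.cpow_one]
    rw [hearg, hPs, Complex.real_smul, _root_.abs_of_pos hP, hPexp]
    calc Complex.exp ((Real.log l + t : ℝ) : ℂ) *
          (a * (Complex.exp (((Real.log l + t : ℝ) : ℂ) * (-a - 1)) * a ^ (-a - 1 : ℂ)) *
            Complex.exp (-a * ((l:ℂ) * Complex.exp (t:ℂ))))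
        = (a ^ (-a - 1 : ℂ) * a) *
            (Complex.exp ((Real.log l + t : ℝ) : ℂ) *
              Complex.exp (((Real.log l + t : ℝ) : ℂ) * (-a - 1)) *
              Complex.exp (-a * ((l:ℂ) * Complex.exp (t:ℂ)))) := by ring
      _ = (a ^ (-a - 1 : ℂ) * a) *
            Complex.exp (((Real.log l + t : ℝ) : ℂ) + ((Real.log l + t : ℝ) : ℂ) * (-a - 1)
              + -a * ((l:ℂ) * Complex.exp (t:ℂ))) := by
          rw [Complex.exp_add, Complex.exp_add]
      _ = (a ^ (-a - 1 : ℂ) * a) *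
            Complex.exp ((((Real.log l : ℝ) : ℂ) * (-a) + -((l:ℂ) * a))
              + -a * ((l : ℂ) * Complex.exp (t : ℂ) + (t : ℂ) - (l : ℂ))) := by
          congr 1
          push_cast
          ring
      _ = ((l : ℂ) * a) ^ (-a) * Complex.exp (-((l : ℂ) * a)) *
            Complex.exp (-a * ((l : ℂ) * Complex.exp (t : ℂ) + (t : ℂ) - (l : ℂ))) := by
          rw [Complex.exp_add, Complex.exp_add, hzpow, hlpow, haa]
          ring
  have hfun : (fun t : ℝ => |l * Real.exp t| •
      (a * ((l:ℂ) * a + a * ((l * (Real.exp t - 1) : ℝ) : ℂ)) ^ (-a - 1) *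
        Complex.exp (-((l:ℂ) * a + a * ((l * (Real.exp t - 1) : ℝ) : ℂ)))))
      = fun t : ℝ => ((l : ℂ) * a) ^ (-a) * Complex.exp (-((l : ℂ) * a)) *
        Complex.exp (-a * ((l : ℂ) * Complex.exp (t : ℂ) + (t : ℂ) - (l : ℂ))) :=
    funext hpt
  rw [h1, h2, hfun, MeasureTheory.integral_const_mul]
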